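/- For every α ∈ (0,1) and every instance, the α-Leftmost-of-Rightmost mechanism satisfies, in the case where the winner w and an optimal alternative o satisfy o < w: average-of-max cost of w is at most ((3-α)/(1-α)) times the average-of-max cost of o. -/

import Mathlib

set_option maxHeartbeats 1000000

theorem stmt_13 (k : ℕ) (A : Finset ℝ)
    (n : Fin (k + 1) → ℕ) (p : (d : Fin (k + 1)) → Fin (n d + 1) → ℝ)
    (y : Fin (k + 1) → ℝ)
    (hy : ∀ d, y d ∈ A ∧ ∀ a ∈ A,
      |Finset.univ.sup' Finset.univ_nonempty (p d) - y d| ≤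
        |Finset.univ.sup' Finset.univ_nonempty (p d) - a|)
    (α : ℝ) (h0 : 0 < α) (h1 : α < 1)
    (w : ℝ)
    (hw : (Multiset.sort
        (Multiset.map y (Finset.univ : Finset (Fin (k + 1))).val) (· ≤ ·))[⌈α * (k + 1 : ℕ)⌉₊ - 1]?
      = some w)
    (o : ℝ) (ho : o ∈ A) (how : o < w) :
    (1 / (k + 1 : ℕ) : ℝ) *
        ∑ d, Finset.univ.sup' Finset.univ_nonempty (fun i => |p d i - w|) ≤
      ((3 - α) / (1 - α)) *
        ((1 / (k + 1 : ℕ) : ℝ) *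
          ∑ d, Finset.univ.sup' Finset.univ_nonempty (fun i => |p d i - o|)) := by
  classical
  set r : ℕ := ⌈α * (k + 1 : ℕ)⌉₊ with hr
  set L : List ℝ := Multiset.sort
      (Multiset.map y (Finset.univ : Finset (Fin (k + 1))).val) (· ≤ ·) with hL
  have hLsorted : L.Pairwise (· ≤ ·) := Multiset.pairwise_sort _ _
  have hLcoe : (L : Multiset ℝ) = Multiset.map y (Finset.univ : Finset (Fin (k + 1))).val :=
    Multiset.sort_eq _ _
  have hLlen : L.length = k + 1 := by
    rw [← Multiset.coe_card, hLcoe]; simp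
  obtain ⟨hidx, hwL⟩ := List.getElem?_eq_some_iff.mp hw
  -- r ≥ 1
  have hrpos : 1 ≤ r := by
    have : (0:ℝ) < α * (k + 1 : ℕ) := by positivity
    exact Nat.one_le_iff_ne_zero.mpr (Nat.ceil_pos.mpr this).ne'
  -- count of districts with w ≤ y d
  set S : Finset (Fin (k + 1)) := Finset.univ.filter (fun d => w ≤ y d) with hS
  have hScard : k + 1 - (r - 1) ≤ S.card := by
    have hcount : S.card = Multiset.countP (fun x => w ≤ x)
        (Multiset.map y (Finset.univ : Finset (Fin (k + 1))).val) := by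
      rw [Multiset.countP_map]
      rfl
    rw [hcount, ← hLcoe, Multiset.coe_countP]
    have hdrop : ∀ x ∈ L.drop (r - 1), w ≤ x := by
      intro x hx
      obtain ⟨j, hj, hxj⟩ := List.mem_iff_getElem.mp hx
      rw [List.getElem_drop] at hxj
      subst hxj
      rw [← hwL]
      have h1 : (⟨r - 1, hidx⟩ : Fin L.length) ≤
          ⟨r - 1 + j, by simpa [List.length_drop] using Nat.add_lt_of_lt_sub' (by
            simpa [List.length_drop] using hj)⟩ := by
        simp [Fin.le_def]
      exact hLsorted.rel_get_of_le h1
    calc k + 1 - (r - 1) = (L.drop (r - 1)).length := by rw [List.length_drop, hLlen]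
      _ = (L.drop (r - 1)).countP (fun x => decide (w ≤ x)) := by
          rw [List.countP_eq_length.mpr (fun a ha => by simpa using hdrop a ha)]
      _ ≤ L.countP (fun x => decide (w ≤ x)) := by
          conv_rhs => rw [← List.take_append_drop (r - 1) L]
          rw [List.countP_append]; omega
  -- per-district cost notation
  set cW : Fin (k + 1) → ℝ :=
    fun d => Finset.univ.sup' Finset.univ_nonempty (fun i => |p d i - w|) with hcW
  set cO : Fin (k + 1) → ℝ :=
    fun d => Finset.univ.sup' Finset.univ_nonempty (fun i => |p d i - o|) with hcO
  have hcOnonneg : ∀ d, 0 ≤ cO d := by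
    intro d
    exact le_trans (abs_nonneg _) (Finset.le_sup' (fun i => |p d i - o|) (Finset.mem_univ 0))
  have hkey : ∀ d ∈ S, (w - o) / 2 ≤ cO d := by
    intro d hd
    have hwy : w ≤ y d := (Finset.mem_filter.mp hd).2
    obtain ⟨i, -, hm⟩ := Finset.exists_mem_eq_sup' (Finset.univ_nonempty)
      (p d)
    set m := Finset.univ.sup' Finset.univ_nonempty (p d) with hmdef
    have h1 : |m - y d| ≤ |m - o| := (hy d).2 o ho
    have h2 : y d - o ≤ |y d - m| + |m - o| := le_trans (le_abs_self _) (abs_sub_le _ _ _)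
    have h3 : |y d - m| = |m - y d| := abs_sub_comm _ _
    have h4 : |m - o| ≤ cO d := by
      rw [hm]
      exact Finset.le_sup' (fun i => |p d i - o|) (Finset.mem_univ i)
    linarith
  have hsum1 : ∑ d, cW d ≤ (∑ d, cO d) + (k + 1 : ℕ) * (w - o) := by
    have : ∀ d : Fin (k + 1), cW d ≤ cO d + (w - o) := by
      intro d
      apply Finset.sup'_le
      intro i _
      have : |p d i - w| ≤ |p d i - o| + |o - w| := abs_sub_le _ _ _
      have h5 : |p d i - o| ≤ cO d := Finset.le_sup' (fun i => |p d i - o|) (Finset.mem_univ i)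
      have h6 : |o - w| = w - o := by rw [abs_sub_comm]; exact abs_of_pos (by linarith)
      linarith
    calc ∑ d, cW d ≤ ∑ d, (cO d + (w - o)) := Finset.sum_le_sum (fun d _ => this d)
      _ = (∑ d, cO d) + (k + 1 : ℕ) * (w - o) := by
          rw [Finset.sum_add_distrib, Finset.sum_const]
          simp [nsmul_eq_mul]
  have hsum2 : (S.card : ℝ) * ((w - o) / 2) ≤ ∑ d, cO d := by
    calc (S.card : ℝ) * ((w - o) / 2) = S.card • ((w - o) / 2) := by simp [nsmul_eq_mul]
      _ ≤ ∑ d ∈ S, cO d := Finset.card_nsmul_le_sum S _ _ hkey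
      _ ≤ ∑ d, cO d := Finset.sum_le_sum_of_subset_of_nonneg (Finset.subset_univ S)
          (fun d _ _ => hcOnonneg d)
  -- card bound as reals
  have hrle : (r : ℝ) < α * (k + 1 : ℕ) + 1 := Nat.ceil_lt_add_one (by positivity)
  have hcard : (1 - α) * ((k : ℝ) + 1) ≤ (S.card : ℝ) := by
    have h7 : (k + 1 - (r - 1) : ℕ) ≤ S.card := hScard
    have h8 : r - 1 < k + 1 := by rw [← hLlen]; exact hidx
    have h9 : ((k + 1 - (r - 1) : ℕ) : ℝ) = (k : ℝ) + 1 - ((r : ℝ) - 1) := by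
      have : r - 1 ≤ k + 1 := le_of_lt h8
      push_cast [Nat.cast_sub this, Nat.cast_sub hrpos]
      ring
    have h10 : ((k + 1 - (r - 1) : ℕ) : ℝ) ≤ (S.card : ℝ) := Nat.cast_le.mpr h7
    rw [h9] at h10
    push_cast at hrle ⊢
    nlinarith
  -- final arithmetic
  have hK : (0:ℝ) < (k + 1 : ℕ) := by positivity
  set C := ∑ d, cO d with hC
  set W := ∑ d, cW d with hW
  have hCnonneg : 0 ≤ C := Finset.sum_nonneg (fun d _ => hcOnonneg d)
  have hwo : 0 < w - o := by linarith
  have h2C : (1 - α) * ((k : ℝ) + 1) * (w - o) ≤ 2 * C := by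
    nlinarith [mul_le_mul_of_nonneg_right hcard (le_of_lt hwo)]
  have hKcast : ((k + 1 : ℕ) : ℝ) = (k : ℝ) + 1 := by push_cast; ring
  have hKpos : (0:ℝ) < (k : ℝ) + 1 := by positivity
  have hrhs : ((3 - α) / (1 - α)) * ((1 / ((k + 1 : ℕ) : ℝ)) * C)
      = ((3 - α) * C) / ((1 - α) * ((k : ℝ) + 1)) := by
    rw [hKcast]; field_simp
  rw [hrhs, hKcast, one_div, inv_mul_eq_div,
    div_le_div_iff₀ hKpos (mul_pos (by linarith : (0:ℝ) < 1 - α) hKpos)]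
  rw [hKcast] at hsum1
  have hfin : W * (1 - α) ≤ (3 - α) * C := by
    nlinarith [mul_le_mul_of_nonneg_right hsum1 (le_of_lt (show (0:ℝ) < 1 - α by linarith))]
  nlinarith [mul_le_mul_of_nonneg_right hfin hKpos.le]
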